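/- arXiv:1802.01297 — 6 statements merged into one kernel-verified Lean document; each statement's English description precedes it below -/
import Mathlib

section
/- Let A be a unital associative ℂ-algebra with a conjugate-linear involution * satisfying (xy)* = y*x*. Let τ : A → ℂ be ℂ-linear with τ(xy) = τ(yx) for all x, y. Let δ₁, δ₂ : A → A be ℂ-linear derivations commuting with the involution (δ_ν(x*) = (δ_ν(x))* for ν = 1,2). Let p ∈ A be a projection (p² = p and p* = p), and set a := (δ₁(p) + i·δ₂(p))·p. Then τ(δ₁(p)·δ₁(p) + δ₂(p)·δ₂(p)) + 2i·τ(p·(δ₁(p)·δ₂(p) − δ₂(p)·δ₁(p))) = 2·τ(a*·a). -/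
/-- Bogomolny-type decomposition: for a projection `p` in a unital ℂ-algebra with
involution, tracial functional `τ`, and star-commuting ℂ-linear derivations
`δ₁, δ₂`, setting `a = (δ₁(p) + i·δ₂(p))·p`, one has
`τ(δ₁(p)δ₁(p) + δ₂(p)δ₂(p)) + 2i·τ(p(δ₁(p)δ₂(p) − δ₂(p)δ₁(p))) = 2·τ(a*·a)`. -/
theorem bogomolny_decomposition
    {A : Type*} [Ring A] [Algebra ℂ A] [StarRing A] [StarModule ℂ A]
    (τ : A →ₗ[ℂ] ℂ) (htr : ∀ x y : A, τ (x * y) = τ (y * x))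
    (δ₁ δ₂ : A →ₗ[ℂ] A)
    (hleib₁ : ∀ x y : A, δ₁ (x * y) = δ₁ x * y + x * δ₁ y)
    (hleib₂ : ∀ x y : A, δ₂ (x * y) = δ₂ x * y + x * δ₂ y)
    (hstar₁ : ∀ x : A, δ₁ (star x) = star (δ₁ x))
    (hstar₂ : ∀ x : A, δ₂ (star x) = star (δ₂ x))
    (p : A) (hp : p * p = p) (hps : star p = p)
    (a : A) (ha : a = (δ₁ p + Complex.I • δ₂ p) * p) :
    τ (δ₁ p * δ₁ p + δ₂ p * δ₂ p)
      + 2 * Complex.I * τ (p * (δ₁ p * δ₂ p - δ₂ p * δ₁ p))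
      = 2 * τ (star a * a) := by
  set d1 := δ₁ p with hd1def
  set d2 := δ₂ p with hd2def
  have hsd1 : star d1 = d1 := by
    have h := hstar₁ p; rw [hps] at h; exact h.symm
  have hsd2 : star d2 = d2 := by
    have h := hstar₂ p; rw [hps] at h; exact h.symm
  have hsa : star a = p * (d1 - Complex.I • d2) := by
    rw [ha, star_mul, star_add, star_smul, hsd1, hsd2, hps, Complex.star_def,
      Complex.conj_I, neg_smul, ← sub_eq_add_neg]
  have hld1 : d1 = d1 * p + p * d1 := by
    conv_lhs => rw [hd1def, ← hp, hleib₁]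
  have hld2 : d2 = d2 * p + p * d2 := by
    conv_lhs => rw [hd2def, ← hp, hleib₂]
  have hcyc : τ (star a * a) = τ ((d1 + Complex.I • d2) * (p * (d1 - Complex.I • d2))) := by
    rw [htr, hsa, ha]
    congr 1
    rw [mul_assoc, ← mul_assoc p p, hp]
  have hexp : (d1 + Complex.I • d2) * (p * (d1 - Complex.I • d2))
      = d1 * (p * d1) + d2 * (p * d2)
        - Complex.I • (d1 * (p * d2)) + Complex.I • (d2 * (p * d1)) := by
    simp only [mul_add, add_mul, sub_mul, mul_sub, smul_mul_assoc, mul_smul_comm,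
      smul_smul, Complex.I_mul_I, neg_smul, one_smul, neg_one_smul]
    match_scalars <;> simp [Complex.I_sq]
  have h1 : τ (d1 * d1) = 2 * τ (d1 * (p * d1)) := by
    nth_rewrite 2 [hld1]
    rw [mul_add, map_add, htr d1 (d1 * p), mul_assoc]
    ring
  have h2 : τ (d2 * d2) = 2 * τ (d2 * (p * d2)) := by
    nth_rewrite 2 [hld2]
    rw [mul_add, map_add, htr d2 (d2 * p), mul_assoc]
    ring
  have h3 : τ (d1 * (p * d2)) = τ (p * (d2 * d1)) := by
    rw [htr d1 (p * d2), mul_assoc]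
  have h4 : τ (d2 * (p * d1)) = τ (p * (d1 * d2)) := by
    rw [htr d2 (p * d1), mul_assoc]
  rw [hcyc, hexp]
  simp only [mul_sub, map_add, map_sub, map_smul, smul_eq_mul]
  linear_combination h1 + h2 + 2 * Complex.I * h3 - 2 * Complex.I * h4
end

section
/- Let A be a unital associative ℂ-algebra with a conjugate-linear involution * satisfying (xy)* = y*x*. Let τ : A → ℂ be ℂ-linear with τ(xy) = τ(yx) for all x, y, and positive in the sense that τ(x*x) is a nonnegative real number for every x ∈ A. Let δ₁, δ₂ : A → A be ℂ-linear derivations with δ_ν(x*) = (δ_ν(x))* for ν = 1,2, and let p ∈ A satisfy p² = p = p*. Then both complex numbers τ(δ₁(p)·δ₁(p) + δ₂(p)·δ₂(p)) + 2i·τ(p·(δ₁(p)·δ₂(p) − δ₂(p)·δ₁(p))) and τ(δ₁(p)·δ₁(p) + δ₂(p)·δ₂(p)) − 2i·τ(p·(δ₁(p)·δ₂(p) − δ₂(p)·δ₁(p))) are nonnegative real numbers. (This is the Belavin–Polyakov bound S(p) ≥ 4π|Q(p)| for the action S(p) = τ(δ₁(p)δ₁(p) + δ₂(p)δ₂(p))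 and topological charge Q(p) = (1/2πi)·τ(p(δ₁(p)δ₂(p) − δ₂(p)δ₁(p))).) -/
theorem bp_expand {A : Type*} [Ring A] [Algebra ℂ A] [StarRing A] [StarModule ℂ A]
    (a b q : A) (ha : star a = a) (hb : star b = b) (hq : star q = q) :
    star ((a + Complex.I • b) * q) * ((a + Complex.I • b) * q)
      = q * (a * (a * q)) + q * (b * (b * q))
        + (Complex.I • (q * (a * (b * q))) - Complex.I • (q * (b * (a * q)))) := by
  simp only [star_mul, star_add, star_smul, ha, hb, hq, Complex.star_def, Complex.conj_I,
    mul_add, add_mul, smul_mul_assoc, mul_smul_comm, smul_smul, mul_assoc, neg_smul,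
    Complex.I_mul_I, neg_mul, neg_neg, one_smul, smul_add, mul_neg, mul_one, mul_neg_one]
  simp only [smul_neg, smul_smul, Complex.I_mul_I, neg_smul, one_smul, neg_neg]
  abel

/-- Belavin–Polyakov bound: for a projection `p` in a unital ℂ-algebra with
involution, a positive tracial ℂ-linear functional `τ`, and star-commuting
ℂ-linear derivations `δ₁, δ₂`, both
`τ(δ₁(p)δ₁(p) + δ₂(p)δ₂(p)) ± 2i·τ(p(δ₁(p)δ₂(p) − δ₂(p)δ₁(p)))`
are nonnegative real numbers. -/
theorem belavin_polyakov_bound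
    {A : Type*} [Ring A] [Algebra ℂ A] [StarRing A] [StarModule ℂ A]
    (τ : A →ₗ[ℂ] ℂ) (htr : ∀ x y : A, τ (x * y) = τ (y * x))
    (hpos : ∀ x : A, ∃ r : ℝ, 0 ≤ r ∧ τ (star x * x) = (r : ℂ))
    (δ₁ δ₂ : A →ₗ[ℂ] A)
    (hleib₁ : ∀ x y : A, δ₁ (x * y) = δ₁ x * y + x * δ₁ y)
    (hleib₂ : ∀ x y : A, δ₂ (x * y) = δ₂ x * y + x * δ₂ y)
    (hstar₁ : ∀ x : A, δ₁ (star x) = star (δ₁ x))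
    (hstar₂ : ∀ x : A, δ₂ (star x) = star (δ₂ x))
    (p : A) (hp : p * p = p) (hps : star p = p) :
    (∃ r : ℝ, 0 ≤ r ∧
      τ (δ₁ p * δ₁ p + δ₂ p * δ₂ p)
        + 2 * Complex.I * τ (p * (δ₁ p * δ₂ p - δ₂ p * δ₁ p)) = (r : ℂ)) ∧
    (∃ r : ℝ, 0 ≤ r ∧
      τ (δ₁ p * δ₁ p + δ₂ p * δ₂ p)
        - 2 * Complex.I * τ (p * (δ₁ p * δ₂ p - δ₂ p * δ₁ p)) = (r : ℂ)) := by
  have ha : star (δ₁ p) = δ₁ p := by rw [← hstar₁, hps]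
  have hb : star (δ₂ p) = δ₂ p := by rw [← hstar₂, hps]
  have hq : star ((1 : A) - p) = 1 - p := by rw [star_sub, star_one, hps]
  have hq2 : ((1 : A) - p) * (1 - p) = 1 - p := by
    simp [mul_sub, sub_mul, hp]
  set a := δ₁ p with ha_def
  have tq : ∀ (q : A), q * q = q → ∀ x y : A, τ (q * (x * (y * q))) = τ (x * (y * q)) := by
    intro q hqq x y
    rw [htr, mul_assoc, mul_assoc, hqq]
  have key : ∀ b' : A, star b' = b' →
      τ (star ((a + Complex.I • b') * p) * ((a + Complex.I • b') * p))
      + τ (star ((a + Complex.I • (-b')) * (1 - p)) * ((a + Complex.I • (-b')) * (1 - p)))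
      = τ (a * a + b' * b') + 2 * Complex.I * τ (p * (a * b' - b' * a)) := by
    intro b' hb'
    have e1 : τ (star ((a + Complex.I • b') * p) * ((a + Complex.I • b') * p))
        = τ (p * (a * (a * p))) + τ (p * (b' * (b' * p)))
          + (Complex.I * τ (p * (a * (b' * p))) - Complex.I * τ (p * (b' * (a * p)))) := by
      rw [bp_expand a b' p ha hb' hps]
      simp [map_add, map_sub, map_smul, smul_eq_mul]
    have e2 : τ (star ((a + Complex.I • (-b')) * (1 - p)) * ((a + Complex.I • (-b')) * (1 - p)))
        = τ ((1 - p) * (a * (a * (1 - p)))) + τ ((1 - p) * (b' * (b' * (1 - p))))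
          - Complex.I * τ ((1 - p) * (a * (b' * (1 - p))))
          + Complex.I * τ ((1 - p) * (b' * (a * (1 - p)))) := by
      rw [bp_expand a (-b') (1 - p) ha (by rw [star_neg, hb']) hq]
      simp only [mul_neg, neg_mul, neg_neg, map_add, map_sub, map_neg, map_smul, smul_eq_mul]
      ring
    have t1 : τ (p * (a * (a * p))) + τ ((1 - p) * (a * (a * (1 - p)))) = τ (a * a) := by
      rw [tq p hp, tq (1 - p) hq2, ← map_add]
      congr 1
      noncomm_ring
    have t2 : τ (p * (b' * (b' * p))) + τ ((1 - p) * (b' * (b' * (1 - p)))) = τ (b' * b') := by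
      rw [tq p hp, tq (1 - p) hq2, ← map_add]
      congr 1
      noncomm_ring
    have hw : ∀ x y : A, τ (x * (y * p)) + τ (x * (y * (1 - p))) = τ (x * y) := by
      intro x y
      rw [← map_add]
      congr 1
      noncomm_ring
    have hs : ∀ x y : A, τ (p * (x * y)) = τ (x * (y * p)) := by
      intro x y
      rw [htr, mul_assoc]
    have t3 : τ (p * (a * (b' * p))) - τ ((1 - p) * (a * (b' * (1 - p))))
        = 2 * τ (p * (a * b')) - τ (a * b') := by
      rw [tq p hp, tq (1 - p) hq2, hs a b']
      linear_combination - hw a b'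
    have t4 : τ (p * (b' * (a * p))) - τ ((1 - p) * (b' * (a * (1 - p))))
        = 2 * τ (p * (b' * a)) - τ (b' * a) := by
      rw [tq p hp, tq (1 - p) hq2, hs b' a]
      linear_combination - hw b' a
    have t5 : τ (a * b') = τ (b' * a) := htr a b'
    have hA : τ (a * a + b' * b') = τ (a * a) + τ (b' * b') := map_add τ _ _
    have hB : τ (p * (a * b' - b' * a)) = τ (p * (a * b')) - τ (p * (b' * a)) := by
      rw [mul_sub, map_sub]
    rw [e1, e2]
    linear_combination t1 + t2 + Complex.I * t3 - Complex.I * t4 - hA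
      - 2 * Complex.I * hB - Complex.I * t5
  constructor
  · obtain ⟨r1, hr1, hx1⟩ := hpos ((a + Complex.I • (δ₂ p)) * p)
    obtain ⟨r2, hr2, hx2⟩ := hpos ((a + Complex.I • (-(δ₂ p))) * (1 - p))
    refine ⟨r1 + r2, by positivity, ?_⟩
    have h := key (δ₂ p) hb
    rw [hx1, hx2] at h
    rw [← h]
    push_cast
    ring
  · obtain ⟨r1, hr1, hx1⟩ := hpos ((a + Complex.I • (-(δ₂ p))) * p)
    obtain ⟨r2, hr2, hx2⟩ := hpos ((a + Complex.I • (-(-(δ₂ p)))) * (1 - p))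
    refine ⟨r1 + r2, by positivity, ?_⟩
    have h := key (-(δ₂ p)) (by rw [star_neg, hb])
    rw [hx1, hx2] at h
    have ea : a * a + (-(δ₂ p)) * (-(δ₂ p)) = a * a + δ₂ p * δ₂ p := by noncomm_ring
    have eb : p * (a * (-(δ₂ p)) - (-(δ₂ p)) * a) = -(p * (a * δ₂ p - δ₂ p * a)) := by
      noncomm_ring
    rw [ea, eb, map_neg] at h
    rw [← sub_eq_iff_eq_add'] at h
    push_cast
    linear_combination -h
end

section
/- Let A be a unital associative ℂ-algebra with a conjugate-linear involution * satisfying (xy)* = y*x*. Let τ : A → ℂ be ℂ-linear with τ(xy) = τ(yx) for all x, y, positive (τ(x*x) is a nonnegative real for all x) and faithful (τ(x*x) = 0 implies x = 0). Let δ₁, δ₂ : A → A be ℂ-linear derivations with δ_ν(x*) = (δ_ν(x))* for ν = 1,2, and let p ∈ A satisfy p² = p = p*. Then τ(δ₁(p)·δ₁(p) + δ₂(p)·δ₂(p)) + 2i·τ(p·(δ₁(p)·δ₂(p) − δ₂(p)·δ₁(p))) = 0 if and only if (δ₁(p) + i·δ₂(p))·p = 0; that is, the action S(p) attains the lower bound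 4πQ(p) exactly when p satisfies the self-duality equation ∂̄(p)p = 0 with ∂̄ = δ₁ + iδ₂. -/
/-- The sigma-model action attains its topological lower bound exactly at
solutions of the self-duality equation: for a projection `p`, a faithful positive
tracial functional `τ`, and star-commuting ℂ-linear derivations `δ₁, δ₂`,
`τ(δ₁(p)δ₁(p) + δ₂(p)δ₂(p)) + 2i·τ(p(δ₁(p)δ₂(p) − δ₂(p)δ₁(p))) = 0` iff
`(δ₁(p) + i·δ₂(p))·p = 0`. -/
theorem action_eq_bound_iff_self_dual
    {A : Type*} [Ring A] [Algebra ℂ A] [StarRing A] [StarModule ℂ A]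
    (τ : A →ₗ[ℂ] ℂ) (htr : ∀ x y : A, τ (x * y) = τ (y * x))
    (hpos : ∀ x : A, ∃ r : ℝ, 0 ≤ r ∧ τ (star x * x) = (r : ℂ))
    (hfaithful : ∀ x : A, τ (star x * x) = 0 → x = 0)
    (δ₁ δ₂ : A →ₗ[ℂ] A)
    (hleib₁ : ∀ x y : A, δ₁ (x * y) = δ₁ x * y + x * δ₁ y)
    (hleib₂ : ∀ x y : A, δ₂ (x * y) = δ₂ x * y + x * δ₂ y)
    (hstar₁ : ∀ x : A, δ₁ (star x) = star (δ₁ x))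
    (hstar₂ : ∀ x : A, δ₂ (star x) = star (δ₂ x))
    (p : A) (hp : p * p = p) (hps : star p = p) :
    τ (δ₁ p * δ₁ p + δ₂ p * δ₂ p)
      + 2 * Complex.I * τ (p * (δ₁ p * δ₂ p - δ₂ p * δ₁ p)) = 0
    ↔ (δ₁ p + Complex.I • δ₂ p) * p = 0 := by
  set a := δ₁ p with ha'
  set b := δ₂ p with hb'
  have ha : a = a * p + p * a := by
    have h := hleib₁ p p; rw [hp] at h; exact h
  have hb : b = b * p + p * b := by
    have h := hleib₂ p p; rw [hp] at h; exact h
  have hsa : star a = a := by rw [ha', ← hstar₁, hps]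
  have hsb : star b = b := by rw [hb', ← hstar₂, hps]
  set x := (a + Complex.I • b) * p with hx
  have key1 : ∀ y : A, τ (p * y * p) = τ (p * y) := by
    intro y
    rw [htr (p * y) p, ← mul_assoc, hp]
  have key2 : ∀ y : A, y = y * p + p * y → τ (y * y) = 2 * τ (p * (y * y)) := by
    intro y hy
    calc τ (y * y) = τ ((y * p + p * y) * y) := by rw [← hy]
      _ = τ ((y * p) * y) + τ ((p * y) * y) := by rw [add_mul, map_add]
      _ = τ (p * (y * y)) + τ (p * (y * y)) := by
          rw [htr (y * p) y, ← mul_assoc, htr (y * y) p, mul_assoc]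
      _ = 2 * τ (p * (y * y)) := by ring
  have hxx : star x * x =
      p * (a * a) * p + p * (b * b) * p
        + Complex.I • (p * (a * b) * p) - Complex.I • (p * (b * a) * p) := by
    rw [hx, star_mul, star_add, star_smul, hps, hsa, hsb, Complex.star_def,
      Complex.conj_I]
    simp only [mul_add, add_mul, smul_add, smul_mul_assoc, mul_smul_comm, smul_smul, neg_one_zsmul,
      neg_mul, Complex.I_mul_I, neg_neg, one_smul, neg_smul, neg_one_smul, mul_neg, neg_mul, smul_neg, mul_assoc]
    abel
  have hτx : τ (star x * x) =
      τ (p * (a * a)) + τ (p * (b * b))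
        + Complex.I * (τ (p * (a * b)) - τ (p * (b * a))) := by
    rw [hxx]
    simp only [map_add, map_sub, map_smul, smul_eq_mul, key1]
    ring
  have main : τ (a * a + b * b)
      + 2 * Complex.I * τ (p * (a * b - b * a)) = 2 * τ (star x * x) := by
    rw [hτx, map_add, key2 a ha, key2 b hb, mul_sub, map_sub]
    ring
  rw [main]
  constructor
  · intro h
    apply hfaithful x
    have h2 : (2 : ℂ) ≠ 0 := two_ne_zero
    exact (mul_eq_zero.mp h).resolve_left h2
  · intro h
    rw [show x = 0 from h]
    simp
end

section
/- Let A and B be unital C*-algebras and let Ξ be an (A,B)-bimodule as in the context, with the additional positivity assumptions that A⟨f,f⟩ ≥ 0 in A and ⟨f,f⟩_B ≥ 0 in B for all f ∈ Ξ. Suppose η ∈ Ξ is such that ⟨η,η⟩_B is invertible in B. Then there exist real constants c₁ > 0 and c₂ > 0 such that for every ξ ∈ Ξ, c₁·A⟨ξ,ξ⟩ ≤ A⟨ξ,η⟩·A⟨η,ξ⟩ ≤ c₂·A⟨ξ,ξ⟩ in the C*-order of A; i.e., {η} is a standard module frame for Ξ. -/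
/-- An (A,B)-bimodule with compatible A-valued and B-valued hermitian pairings,
as in the Morita-equivalence picture for noncommutative tori. -/
structure HermitianBimodule (A B Ξ : Type*) [Ring A] [Ring B]
    [Algebra ℂ A] [Algebra ℂ B] [StarRing A] [StarRing B]
    [AddCommGroup Ξ] [Module ℂ Ξ] where
  /-- the left action of `A` -/
  smulA : A → Ξ → Ξ
  /-- the right action of `B` -/
  smulB : Ξ → B → Ξ
  /-- the `A`-valued pairing `A⟨·,·⟩` -/
  ipA : Ξ → Ξ → A
  /-- the `B`-valued pairing `⟨·,·⟩_B` -/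
  ipB : Ξ → Ξ → B
  -- left A-module axioms, ℂ-bilinear
  smulA_add : ∀ (a : A) (f g : Ξ), smulA a (f + g) = smulA a f + smulA a g
  add_smulA : ∀ (a b : A) (f : Ξ), smulA (a + b) f = smulA a f + smulA b f
  mul_smulA : ∀ (a b : A) (f : Ξ), smulA (a * b) f = smulA a (smulA b f)
  one_smulA : ∀ f : Ξ, smulA 1 f = f
  smulA_complex : ∀ (c : ℂ) (a : A) (f : Ξ), smulA a (c • f) = c • smulA a f
  complex_smulA : ∀ (c : ℂ) (a : A) (f : Ξ), smulA (c • a) f = c • smulA a f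
  -- right B-module axioms, ℂ-bilinear
  smulB_add : ∀ (f g : Ξ) (b : B), smulB (f + g) b = smulB f b + smulB g b
  add_smulB : ∀ (f : Ξ) (b c : B), smulB f (b + c) = smulB f b + smulB f c
  mul_smulB : ∀ (f : Ξ) (b c : B), smulB f (b * c) = smulB (smulB f b) c
  smulB_one : ∀ f : Ξ, smulB f 1 = f
  smulB_complex : ∀ (c : ℂ) (f : Ξ) (b : B), smulB (c • f) b = c • smulB f b
  complex_smulB : ∀ (c : ℂ) (f : Ξ) (b : B), smulB f (c • b) = c • smulB f b
  -- bimodule compatibility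
  smulA_smulB : ∀ (a : A) (f : Ξ) (b : B), smulB (smulA a f) b = smulA a (smulB f b)
  -- the A-valued pairing: ℂ-linear in the first variable, conjugate-linear in the second
  ipA_add_left : ∀ f g h : Ξ, ipA (f + g) h = ipA f h + ipA g h
  ipA_add_right : ∀ f g h : Ξ, ipA f (g + h) = ipA f g + ipA f h
  ipA_smul_left : ∀ (c : ℂ) (f g : Ξ), ipA (c • f) g = c • ipA f g
  ipA_smul_right : ∀ (c : ℂ) (f g : Ξ), ipA f (c • g) = (starRingEnd ℂ c) • ipA f g
  ipA_smulA : ∀ (a : A) (f g : Ξ), ipA (smulA a f) g = a * ipA f g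
  ipA_smulB : ∀ (f : Ξ) (b : B) (g : Ξ), ipA (smulB f b) g = ipA f (smulB g (star b))
  ipA_star : ∀ f g : Ξ, star (ipA f g) = ipA g f
  -- the B-valued pairing: conjugate-linear in the first variable, ℂ-linear in the second
  ipB_add_left : ∀ f g h : Ξ, ipB (f + g) h = ipB f h + ipB g h
  ipB_add_right : ∀ f g h : Ξ, ipB f (g + h) = ipB f g + ipB f h
  ipB_smul_left : ∀ (c : ℂ) (f g : Ξ), ipB (c • f) g = (starRingEnd ℂ c) • ipB f g
  ipB_smul_right : ∀ (c : ℂ) (f g : Ξ), ipB f (c • g) = c • ipB f g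
  ipB_smulB_right : ∀ (f g : Ξ) (b : B), ipB f (smulB g b) = ipB f g * b
  ipB_smulB_left : ∀ (f : Ξ) (b : B) (g : Ξ), ipB (smulB f b) g = star b * ipB f g
  ipB_star : ∀ f g : Ξ, star (ipB f g) = ipB g f
  -- associativity of the two pairings
  assoc : ∀ f g h : Ξ, smulB f (ipB g h) = smulA (ipA f g) h

set_option linter.unusedSectionVars false

section Aux

variable {A B Ξ : Type*}
    [NormedRing A] [StarRing A] [CStarRing A] [NormedAlgebra ℂ A]
    [CompleteSpace A] [PartialOrder A] [StarOrderedRing A] [StarModule ℂ A]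
    [NormedRing B] [StarRing B] [CStarRing B] [NormedAlgebra ℂ B]
    [CompleteSpace B] [PartialOrder B] [StarOrderedRing B] [StarModule ℂ B]
    [AddCommGroup Ξ] [Module ℂ Ξ]

lemma HermitianBimodule.smulB_zero (M : HermitianBimodule A B Ξ) (ξ : Ξ) :
    M.smulB ξ 0 = 0 := by
  have h := M.add_smulB ξ 0 0
  rw [add_zero] at h
  exact (left_eq_add.mp h)

lemma HermitianBimodule.ipA_zero_left (M : HermitianBimodule A B Ξ) (ξ : Ξ) :
    M.ipA 0 ξ = 0 := by
  have h := M.ipA_add_left 0 0 ξ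
  rw [add_zero] at h
  exact (left_eq_add.mp h)

/-- positivity of `d ↦ A⟨ξ·d, ξ⟩` for `0 ≤ d`. -/
lemma HermitianBimodule.smulB_ip_nonneg (M : HermitianBimodule A B Ξ)
    (hposA : ∀ f : Ξ, 0 ≤ M.ipA f f) (ξ : Ξ) {d : B} (hd : 0 ≤ d) :
    0 ≤ M.ipA (M.smulB ξ d) ξ := by
  rw [StarOrderedRing.nonneg_iff] at hd
  induction hd using AddSubmonoid.closure_induction with
  | mem x hx =>
      obtain ⟨s, rfl⟩ := hx
      rw [M.mul_smulB, M.ipA_smulB]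
      exact hposA _
  | zero => rw [M.smulB_zero, M.ipA_zero_left]
  | add x y _ _ hx hy =>
      rw [M.add_smulB, M.ipA_add_left]
      exact add_nonneg hx hy

end Aux

/-- If `⟨η,η⟩_B` is invertible in the C*-algebra `B`, then `{η}` is a standard
module frame: there are constants `0 < c₁, c₂` with
`c₁·A⟨ξ,ξ⟩ ≤ A⟨ξ,η⟩·A⟨η,ξ⟩ ≤ c₂·A⟨ξ,ξ⟩` for all `ξ`. -/
theorem single_standard_module_frame
    {A B Ξ : Type*}
    [NormedRing A] [StarRing A] [CStarRing A] [NormedAlgebra ℂ A]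
    [CompleteSpace A] [PartialOrder A] [StarOrderedRing A] [StarModule ℂ A]
    [NormedRing B] [StarRing B] [CStarRing B] [NormedAlgebra ℂ B]
    [CompleteSpace B] [PartialOrder B] [StarOrderedRing B] [StarModule ℂ B]
    [AddCommGroup Ξ] [Module ℂ Ξ]
    (M : HermitianBimodule A B Ξ)
    (hposA : ∀ f : Ξ, 0 ≤ M.ipA f f)
    (hposB : ∀ f : Ξ, 0 ≤ M.ipB f f)
    (η : Ξ) (hη : IsUnit (M.ipB η η)) :
    ∃ c₁ c₂ : ℝ, 0 < c₁ ∧ 0 < c₂ ∧ ∀ ξ : Ξ,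
      (c₁ : ℂ) • M.ipA ξ ξ ≤ M.ipA ξ η * M.ipA η ξ ∧
      M.ipA ξ η * M.ipA η ξ ≤ (c₂ : ℂ) • M.ipA ξ ξ := by
  classical
  set b := M.ipB η η with hb_def
  have hb : 0 ≤ b := hposB η
  have hbsa : IsSelfAdjoint b := IsSelfAdjoint.of_nonneg hb
  -- obtain the two scalar bounds in B
  have hbounds : ∃ c₁ c₂ : ℝ, 0 < c₁ ∧ 0 < c₂ ∧
      algebraMap ℝ B c₁ ≤ b ∧ b ≤ algebraMap ℝ B c₂ := by
    letI : CStarAlgebra B := { }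
    rcases subsingleton_or_nontrivial B with hB | hB
    · exact ⟨1, 1, one_pos, one_pos, Subsingleton.le _ _, Subsingleton.le _ _⟩
    · have hspec : ∀ x ∈ spectrum ℝ b, 0 < x := by
        intro x hx
        have hx0 : 0 ≤ x := spectrum_nonneg_of_nonneg hb hx
        rcases hx0.lt_or_eq with h | h
        · exact h
        · exact absurd (h ▸ hx) ((spectrum.zero_notMem_iff ℝ).mpr hη)
      obtain ⟨c₁, hc₁, hc₁le⟩ := (CFC.exists_pos_algebraMap_le_iff hbsa).mpr hspec
      refine ⟨c₁, ‖b‖, hc₁, ?_, hc₁le, hbsa.le_algebraMap_norm_self⟩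
      have hbne : b ≠ 0 := hη.ne_zero
      exact norm_pos_iff.mpr hbne
  obtain ⟨c₁, c₂, hc₁, hc₂, h₁, h₂⟩ := hbounds
  -- rewrite algebraMap ℝ B r as (r : ℂ) • (1 : B)
  have halg : ∀ r : ℝ, algebraMap ℝ B r = (r : ℂ) • (1 : B) := by
    intro r
    rw [IsScalarTower.algebraMap_apply ℝ ℂ B, Algebra.algebraMap_eq_smul_one]
    norm_num
  -- the key identity
  have hkey : ∀ ξ : Ξ, M.ipA (M.smulB ξ b) ξ = M.ipA ξ η * M.ipA η ξ := by
    intro ξ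
    rw [hb_def, M.assoc, M.ipA_smulA]
  have hscal : ∀ (ξ : Ξ) (r : ℝ), M.ipA (M.smulB ξ (algebraMap ℝ B r)) ξ
      = (r : ℂ) • M.ipA ξ ξ := by
    intro ξ r
    rw [halg, M.complex_smulB, M.smulB_one, M.ipA_smul_left]
  refine ⟨c₁, c₂, hc₁, hc₂, fun ξ => ?_⟩
  constructor
  · have hd : 0 ≤ M.ipA (M.smulB ξ (b - algebraMap ℝ B c₁)) ξ :=
      M.smulB_ip_nonneg hposA ξ (sub_nonneg.mpr h₁)
    have hsplit : M.ipA (M.smulB ξ b) ξ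
        = M.ipA (M.smulB ξ (algebraMap ℝ B c₁)) ξ
          + M.ipA (M.smulB ξ (b - algebraMap ℝ B c₁)) ξ := by
      rw [← M.ipA_add_left, ← M.add_smulB, add_sub_cancel]
    rw [← hkey ξ, hsplit, hscal]
    exact le_add_of_nonneg_right hd
  · have hd : 0 ≤ M.ipA (M.smulB ξ (algebraMap ℝ B c₂ - b)) ξ :=
      M.smulB_ip_nonneg hposA ξ (sub_nonneg.mpr h₂)
    have hsplit : M.ipA (M.smulB ξ (algebraMap ℝ B c₂)) ξ
        = M.ipA (M.smulB ξ b) ξ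
          + M.ipA (M.smulB ξ (algebraMap ℝ B c₂ - b)) ξ := by
      rw [← M.ipA_add_left, ← M.add_smulB, add_sub_cancel]
    rw [← hkey ξ, ← hscal ξ c₂, hsplit]
    exact le_add_of_nonneg_right hd
end

section
/- Let A and B be unital ℂ-algebras with involutions, Ξ an (A,B)-bimodule as in the context, and for ν = 1,2 let δ_ν, d_ν, ∇_ν be derivations and connections as in the context. Suppose η ∈ Ξ is such that ⟨η,η⟩_B is invertible in B, and set p := A⟨η·⟨η,η⟩_B⁻¹, η⟩. Then for each ν = 1,2: δ_ν(p)·p = (1 − p)·A⟨∇_ν η, η·⟨η,η⟩_B⁻¹⟩. -/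
/-- For derivations `δ_ν` on `A`, `d_ν` on `B` and compatible connections `∇_ν` on `Ξ`
(`ν = 1,2`), and `η` with `⟨η,η⟩_B` invertible, the Rieffel-type projection
`p = A⟨η·⟨η,η⟩_B⁻¹, η⟩` satisfies `δ_ν(p)·p = (1 − p)·A⟨∇_ν η, η·⟨η,η⟩_B⁻¹⟩`. -/
theorem deriv_projection_formula
    {A B Ξ : Type*} [Ring A] [Ring B]
    [Algebra ℂ A] [Algebra ℂ B] [StarRing A] [StarRing B]
    [StarModule ℂ A] [StarModule ℂ B]
    [AddCommGroup Ξ] [Module ℂ Ξ]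
    (M : HermitianBimodule A B Ξ)
    (δ : Fin 2 → A → A) (d : Fin 2 → B → B) (conn : Fin 2 → Ξ → Ξ)
    (hδ_add : ∀ ν (x y : A), δ ν (x + y) = δ ν x + δ ν y)
    (hδ_smul : ∀ ν (c : ℂ) (x : A), δ ν (c • x) = c • δ ν x)
    (hδ_leibniz : ∀ ν (x y : A), δ ν (x * y) = δ ν x * y + x * δ ν y)
    (hd_add : ∀ ν (x y : B), d ν (x + y) = d ν x + d ν y)
    (hd_smul : ∀ ν (c : ℂ) (x : B), d ν (c • x) = c • d ν x)
    (hd_leibniz : ∀ ν (x y : B), d ν (x * y) = d ν x * y + x * d ν y)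
    (hconn_add : ∀ ν (f g : Ξ), conn ν (f + g) = conn ν f + conn ν g)
    (hconn_smul : ∀ ν (c : ℂ) (f : Ξ), conn ν (c • f) = c • conn ν f)
    (hconn_leibniz : ∀ ν (f : Ξ) (b : B),
      conn ν (M.smulB f b) = M.smulB (conn ν f) b + M.smulB f (d ν b))
    (hcompatA : ∀ ν (f g : Ξ),
      δ ν (M.ipA f g) = M.ipA (conn ν f) g + M.ipA f (conn ν g))
    (hcompatB : ∀ ν (f g : Ξ),
      d ν (M.ipB f g) = M.ipB (conn ν f) g + M.ipB f (conn ν g))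
    (η : Ξ) (hη : IsUnit (M.ipB η η))
    (p : A) (hpdef : p = M.ipA (M.smulB η (Ring.inverse (M.ipB η η))) η) :
    ∀ ν : Fin 2, δ ν p * p
      = (1 - p) * M.ipA (conn ν η) (M.smulB η (Ring.inverse (M.ipB η η))) := by
  intro ν
  set e := M.ipB η η with he
  set u := Ring.inverse e with hu
  have hue : u * e = 1 := Ring.inverse_mul_cancel e hη
  have heu : e * u = 1 := Ring.mul_inverse_cancel e hη
  have hse : star e = e := M.ipB_star η η
  have hsu : star u = u := by
    have h1 : star u * e = 1 := by
      calc star u * e = star (e * u) := by rw [star_mul, hse]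
      _ = 1 := by rw [heu, star_one]
    calc star u = star u * (e * u) := by rw [heu, mul_one]
    _ = (star u * e) * u := by rw [mul_assoc]
    _ = u := by rw [h1, one_mul]
  have hpη : M.smulA p η = η := by
    rw [hpdef, ← M.assoc, ← M.mul_smulB, ← he, hue, M.smulB_one]
  have key : ∀ (b : B) (g : Ξ), p * M.ipA (M.smulB η b) g = M.ipA (M.smulB η b) g := by
    intro b g
    rw [← M.ipA_smulA, ← M.smulA_smulB, hpη]
  have key0 : ∀ (b : B) (g : Ξ),
      (1 - p) * M.ipA (M.smulB η b) g = 0 := by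
    intro b g
    rw [sub_mul, one_mul, key, sub_self]
  have hpp : p * p = p := by
    nth_rewrite 2 [hpdef]
    rw [key, ← hpdef]
  have hlb := hδ_leibniz ν p p
  rw [hpp] at hlb
  have hδpp : δ ν p * p = (1 - p) * δ ν p := by
    rw [sub_mul, one_mul, eq_sub_iff_add_eq]
    exact hlb.symm
  have hδp : δ ν p
      = M.ipA (M.smulB (conn ν η) u) η + M.ipA (M.smulB η (d ν u)) η
        + M.ipA (M.smulB η u) (conn ν η) := by
    rw [hpdef, hcompatA, hconn_leibniz, M.ipA_add_left]
  rw [hδpp, hδp, mul_add, mul_add, key0, key0, add_zero, add_zero,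
    M.ipA_smulB, hsu]
end

section
/- Let A and B be unital ℂ-algebras with involutions, Ξ an (A,B)-bimodule as in the context, and for ν = 1,2 let δ_ν, d_ν, ∇_ν be derivations and connections as in the context. Write δ̄ := δ₁ + i·δ₂ on A and ∇̄ := ∇₁ + i·∇₂ on Ξ. Suppose η ∈ Ξ is such that ⟨η,η⟩_B is invertible in B, and set p := A⟨η·⟨η,η⟩_B⁻¹, η⟩. Then δ̄(p)·p = 0 if and only if there exists b ∈ B with ∇̄η = η·b. -/
/-- Self-duality of the Rieffel-type projection is equivalent to a linear
equation on the module: with `δ̄ = δ₁ + i·δ₂`, `∇̄ = ∇₁ + i·∇₂` and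
`p = A⟨η·⟨η,η⟩_B⁻¹, η⟩` (for `⟨η,η⟩_B` invertible),
`δ̄(p)·p = 0` iff `∇̄η = η·b` for some `b ∈ B`. -/
theorem self_duality_iff_linear_equation
    {A B Ξ : Type*} [Ring A] [Ring B]
    [Algebra ℂ A] [Algebra ℂ B] [StarRing A] [StarRing B]
    [StarModule ℂ A] [StarModule ℂ B]
    [AddCommGroup Ξ] [Module ℂ Ξ]
    (M : HermitianBimodule A B Ξ)
    (δ : Fin 2 → A → A) (d : Fin 2 → B → B) (conn : Fin 2 → Ξ → Ξ)
    (hδ_add : ∀ ν (x y : A), δ ν (x + y) = δ ν x + δ ν y)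
    (hδ_smul : ∀ ν (c : ℂ) (x : A), δ ν (c • x) = c • δ ν x)
    (hδ_leibniz : ∀ ν (x y : A), δ ν (x * y) = δ ν x * y + x * δ ν y)
    (hd_add : ∀ ν (x y : B), d ν (x + y) = d ν x + d ν y)
    (hd_smul : ∀ ν (c : ℂ) (x : B), d ν (c • x) = c • d ν x)
    (hd_leibniz : ∀ ν (x y : B), d ν (x * y) = d ν x * y + x * d ν y)
    (hconn_add : ∀ ν (f g : Ξ), conn ν (f + g) = conn ν f + conn ν g)
    (hconn_smul : ∀ ν (c : ℂ) (f : Ξ), conn ν (c • f) = c • conn ν f)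
    (hconn_leibniz : ∀ ν (f : Ξ) (b : B),
      conn ν (M.smulB f b) = M.smulB (conn ν f) b + M.smulB f (d ν b))
    (hcompatA : ∀ ν (f g : Ξ),
      δ ν (M.ipA f g) = M.ipA (conn ν f) g + M.ipA f (conn ν g))
    (hcompatB : ∀ ν (f g : Ξ),
      d ν (M.ipB f g) = M.ipB (conn ν f) g + M.ipB f (conn ν g))
    (δbar : A → A) (hδbar : ∀ x : A, δbar x = δ 0 x + Complex.I • δ 1 x)
    (connbar : Ξ → Ξ) (hconnbar : ∀ f : Ξ, connbar f = conn 0 f + Complex.I • conn 1 f)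
    (η : Ξ) (hη : IsUnit (M.ipB η η))
    (p : A) (hpdef : p = M.ipA (M.smulB η (Ring.inverse (M.ipB η η))) η) :
    δbar p * p = 0 ↔ ∃ b : B, connbar η = M.smulB η b := by

  -- basic zero/neg lemmas for the non-bundled operations
  have hsB0l : ∀ b : B, M.smulB 0 b = 0 := fun b => by
    have h := M.smulB_add 0 0 b
    rw [add_zero] at h
    exact left_eq_add.mp h
  have hsA0 : ∀ f : Ξ, M.smulA 0 f = 0 := fun f => by
    have h := M.add_smulA 0 0 f
    rw [add_zero] at h
    exact left_eq_add.mp h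
  have hipA0 : ∀ g : Ξ, M.ipA 0 g = 0 := fun g => by
    have h := M.ipA_add_left 0 0 g
    rw [add_zero] at h
    exact left_eq_add.mp h
  have hsBnegl : ∀ (f : Ξ) (b : B), M.smulB (-f) b = -M.smulB f b := fun f b => by
    have h := M.smulB_add f (-f) b
    rw [add_neg_cancel, hsB0l] at h
    exact (eq_neg_of_add_eq_zero_right h.symm)
  have hsBnegr : ∀ (f : Ξ) (b : B), M.smulB f (-b) = -M.smulB f b := fun f b => by
    have h := M.add_smulB f b (-b)
    rw [add_neg_cancel] at h
    have h0 : M.smulB f (0 : B) = 0 := by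
      have h' := M.add_smulB f 0 0
      rw [add_zero] at h'
      exact left_eq_add.mp h'
    rw [h0] at h
    exact (eq_neg_of_add_eq_zero_right h.symm)
  have hsBsub : ∀ (f g : Ξ) (b : B), M.smulB (f - g) b = M.smulB f b - M.smulB g b :=
    fun f g b => by rw [sub_eq_add_neg, M.smulB_add, hsBnegl, sub_eq_add_neg]
  have hd1 : ∀ ν, d ν (1 : B) = 0 := fun ν => by
    have h := hd_leibniz ν 1 1
    simp only [mul_one, one_mul] at h
    exact left_eq_add.mp h
  set q := M.ipB η η with hq
  set qi := Ring.inverse q with hqidef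
  have hq1 : q * qi = 1 := by rw [hqidef]; exact Ring.mul_inverse_cancel _ hη
  have hq2 : qi * q = 1 := by rw [hqidef]; exact Ring.inverse_mul_cancel _ hη
  set ξ := M.smulB η qi with hξ
  have hηξ : M.ipB η ξ = 1 := by rw [hξ, M.ipB_smulB_right, ← hq, hq1]
  have mulp : ∀ f : Ξ, M.ipA f η * p = M.ipA f η := fun f => by
    rw [hpdef, ← M.ipA_smulA, ← M.assoc, hηξ, M.smulB_one]
  set T := M.ipB (conn 0 η + (-Complex.I) • conn 1 η) η with hT
  set S := M.ipB η (connbar η) with hS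
  -- expansion of δbar p
  have hδp : δbar p = M.ipA (connbar ξ) η
      + M.ipA ξ (conn 0 η + (-Complex.I) • conn 1 η) := by
    rw [hδbar, hpdef]
    simp only [hcompatA, hconnbar, M.ipA_add_left, M.ipA_add_right, M.ipA_smul_left,
      M.ipA_smul_right, map_neg, Complex.conj_I, neg_neg, smul_add]
    module
  -- derivative of q
  have hDq : d 0 q + Complex.I • d 1 q = T + S := by
    simp only [hq, hT, hS, hcompatB, hconnbar, M.ipB_add_left, M.ipB_add_right,
      M.ipB_smul_left, M.ipB_smul_right, map_neg, Complex.conj_I, neg_neg, smul_add]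
    module
  -- derivative of qi
  have hdinv : ∀ ν, d ν qi = -(qi * d ν q * qi) := fun ν => by
    have h := hd_leibniz ν q qi
    rw [hq1, hd1] at h
    have h2 : q * d ν qi = -(d ν q * qi) := eq_neg_of_add_eq_zero_right h.symm
    calc d ν qi = (qi * q) * d ν qi := by rw [hq2, one_mul]
      _ = qi * (q * d ν qi) := by rw [mul_assoc]
      _ = qi * -(d ν q * qi) := by rw [h2]
      _ = -(qi * d ν q * qi) := by rw [mul_neg, mul_assoc]
  have hXB : d 0 qi + Complex.I • d 1 qi = -(qi * (T + S) * qi) := by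
    rw [hdinv 0, hdinv 1, ← hDq, mul_add, add_mul, mul_smul_comm, smul_mul_assoc,
      neg_add, smul_neg]
  have hXB2 : d 0 qi + Complex.I • d 1 qi + qi * (T * qi) = -(qi * S * qi) := by
    rw [hXB, mul_add, add_mul, ← mul_assoc]
    abel
  have Hexp : M.smulB η (d 0 qi) + Complex.I • M.smulB η (d 1 qi)
      + M.smulB η (qi * (T * qi)) = -(M.smulB η (qi * S * qi)) := by
    have h := congrArg (M.smulB η) hXB2
    rw [M.add_smulB, M.add_smulB, M.complex_smulB, hsBnegr] at h
    exact h
  -- the key algebraic identity inside the module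
  have hX : connbar ξ + M.smulB ξ (M.ipB (conn 0 η + (-Complex.I) • conn 1 η) ξ)
      = M.smulB (connbar η - M.smulB η (qi * S)) qi := by
    rw [hconnbar ξ, hξ, hconn_leibniz 0 η qi, hconn_leibniz 1 η qi,
      M.ipB_smulB_right, ← hT, ← M.mul_smulB η qi (T * qi),
      hsBsub, hconnbar η, M.smulB_add, M.smulB_complex, ← M.mul_smulB η (qi * S) qi,
      smul_add, sub_eq_add_neg, ← Hexp, ← M.complex_smulB]
    abel
  -- key identity for δbar p * p
  have key : δbar p * p = M.ipA (M.smulB (connbar η - M.smulB η (qi * S)) qi) η := by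
    rw [hδp, add_mul, mulp (connbar ξ), hpdef, ← M.ipA_smulA, ← M.assoc,
      ← M.ipA_add_left, hX]
  constructor
  · intro h0
    rw [key] at h0
    have h1 : M.smulB (M.smulB (connbar η - M.smulB η (qi * S)) qi) (M.ipB η ξ) = 0 := by
      rw [M.assoc, h0, hsA0]
    rw [hηξ, M.smulB_one] at h1
    have h3 : M.smulB (connbar η - M.smulB η (qi * S)) (qi * q) = 0 := by
      rw [M.mul_smulB, h1, hsB0l]
    rw [hq2, M.smulB_one] at h3
    exact ⟨qi * S, sub_eq_zero.mp h3⟩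
  · rintro ⟨b, hb⟩
    have hw : connbar η - M.smulB η (qi * S) = 0 := by
      rw [hS, hb, M.ipB_smulB_right, ← hq, ← mul_assoc, hq2, one_mul, sub_self]
    rw [key, hw, hsB0l, hipA0]
end
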